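/- Let Σ = (X, Y, M(U), φ, h) be a linear control system with U ≠ {0} that is exponentially stable, robust with respect to the input, and strictly causal. Then the minimum IOS-gain can be computed using only periodic inputs: γ = sup{ sup_{t≥0} ‖h(φ(t,0,u))‖_Y : u ∈ M_per(U), sup_{s≥0}‖u(s)‖_U = 1 }, where M_per(U) := { u ∈ M(U) : u is periodic }. -/

import Mathlib

open Filter

noncomputable section

/-- A linear control system `Σ = (X, Y, M(U), φ, h)` in the sense of
Karafyllis, "On the Relation of IOS-Gains and Asymptotic Gains For Linear Systems".
Inputs are functions `u : ℝ → U`; only values on `[0, ∞)` are relevant. -/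
structure LinearControlSystem (X Y U : Type*)
    [NormedAddCommGroup X] [NormedSpace ℝ X]
    [NormedAddCommGroup Y] [NormedSpace ℝ Y]
    [NormedAddCommGroup U] [NormedSpace ℝ U] where
  /-- the set `M(U)` of admissible inputs -/
  inputs : Set (ℝ → U)
  /-- the transition map `φ` -/
  trans : ℝ → X → (ℝ → U) → X
  /-- the continuous linear output map `h : X → Y` -/
  out : X →L[ℝ] Y
  /-- `U ≠ {0}` -/
  U_nontrivial : ∃ v : U, v ≠ 0
  /-- inputs are locally bounded -/
  loc_bdd : ∀ u ∈ inputs, ∀ T : ℝ, BddAbove ((fun s => ‖u s‖) '' Set.Icc 0 T)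
  zero_mem : (0 : ℝ → U) ∈ inputs
  add_mem : ∀ u₁ ∈ inputs, ∀ u₂ ∈ inputs, u₁ + u₂ ∈ inputs
  smul_mem : ∀ u ∈ inputs, ∀ c : ℝ, c • u ∈ inputs
  concat_le_mem : ∀ u₁ ∈ inputs, ∀ u₂ ∈ inputs, ∀ τ > (0 : ℝ),
    (fun t => if t ≤ τ then u₁ t else u₂ (t - τ)) ∈ inputs
  concat_lt_mem : ∀ u₁ ∈ inputs, ∀ u₂ ∈ inputs, ∀ τ > (0 : ℝ),
    (fun t => if t < τ then u₁ t else u₂ (t - τ)) ∈ inputs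
  /-- closure under the shift operator `δ_τ` -/
  shift_mem : ∀ u ∈ inputs, ∀ τ > (0 : ℝ), (fun t => u (t + τ)) ∈ inputs
  exists_input_val : ∀ v : U, ∃ u ∈ inputs, u 0 = v
  /-- closure under `T`-periodic extension -/
  periodic_ext_mem : ∀ u ∈ inputs, ∀ T > (0 : ℝ),
    (fun t => u (t - T * ⌊t / T⌋)) ∈ inputs
  identity : ∀ x : X, ∀ u ∈ inputs, trans 0 x u = x
  causality : ∀ t ≥ (0 : ℝ), ∀ x : X, ∀ u ∈ inputs, ∀ v ∈ inputs,
    (∀ s, 0 ≤ s → s ≤ t → u s = v s) → trans t x u = trans t x v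
  semigroup : ∀ x : X, ∀ u ∈ inputs, ∀ τ t : ℝ, 0 ≤ τ → τ ≤ t →
    trans t x u = trans (t - τ) (trans τ x u) (fun s => u (s + τ))
  linearity : ∀ t ≥ (0 : ℝ), ∀ x₁ x₂ : X, ∀ u₁ ∈ inputs, ∀ u₂ ∈ inputs, ∀ a b : ℝ,
    trans t (a • x₁ + b • x₂) (a • u₁ + b • u₂) = a • trans t x₁ u₁ + b • trans t x₂ u₂

namespace LinearControlSystem

variable {X Y U : Type*}
    [NormedAddCommGroup X] [NormedSpace ℝ X]
    [NormedAddCommGroup Y] [NormedSpace ℝ Y]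
    [NormedAddCommGroup U] [NormedSpace ℝ U]

/-- `sup_{0 ≤ s ≤ t} ‖u(s)‖`. -/
def runSup (u : ℝ → U) (t : ℝ) : ℝ :=
  sSup ((fun s => ‖u s‖) '' Set.Icc 0 t)

/-- `sup_{s ≥ 0} ‖u(s)‖`. -/
def supNorm (u : ℝ → U) : ℝ :=
  sSup ((fun s => ‖u s‖) '' Set.Ici 0)

/-- exponential stability with the specific constants `M, σ > 0` -/
def IsES (sys : LinearControlSystem X Y U) (M σ : ℝ) : Prop :=
  0 < M ∧ 0 < σ ∧ ∀ x : X, ∀ t ≥ (0 : ℝ),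
    ‖sys.trans t x 0‖ ≤ M * Real.exp (-σ * t) * ‖x‖

/-- exponential stability (ES) -/
def ES (sys : LinearControlSystem X Y U) : Prop :=
  ∃ M σ : ℝ, sys.IsES M σ

/-- robustness with respect to the input, with the specific nondecreasing function `b` -/
def IsRobust (sys : LinearControlSystem X Y U) (b : ℝ → ℝ) : Prop :=
  MonotoneOn b (Set.Ici 0) ∧ (∀ t, 0 ≤ b t) ∧
    ∀ u ∈ sys.inputs, ∀ t ≥ (0 : ℝ), ‖sys.trans t 0 u‖ ≤ b t * runSup u t

/-- robustness with respect to the input -/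
def Robust (sys : LinearControlSystem X Y U) : Prop :=
  ∃ b : ℝ → ℝ, sys.IsRobust b

/-- strict causality -/
def StrictlyCausal (sys : LinearControlSystem X Y U) : Prop :=
  ∀ t > (0 : ℝ), ∀ u ∈ sys.inputs, ∀ v ∈ sys.inputs,
    (∀ s, 0 ≤ s → s < t → u s = v s) → sys.trans t 0 u = sys.trans t 0 v

/-- the minimum IOS-gain `γ` -/
def gain (sys : LinearControlSystem X Y U) : ℝ :=
  sSup {r | ∃ t ≥ (0 : ℝ), ∃ u ∈ sys.inputs, runSup u t = 1 ∧ r = ‖sys.out (sys.trans t 0 u)‖}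

/-- the minimum output asymptotic gain `γ_as` -/
def asympGain (sys : LinearControlSystem X Y U) : ℝ :=
  sSup {r | ∃ u ∈ sys.inputs, supNorm u = 1 ∧
    r = limsup (fun t => ‖sys.out (sys.trans t 0 u)‖) atTop}

/-- the value `V(T)` of the optimal control problem (4.5) -/
def V (sys : LinearControlSystem X Y U) (T : ℝ) : ℝ :=
  sSup {r | ∃ u ∈ sys.inputs, runSup u T = 1 ∧ r = ‖sys.out (sys.trans T 0 u)‖}

/-- periodic inputs -/
def Periodic (u : ℝ → U) : Prop :=
  ∃ T > (0 : ℝ), ∀ t ≥ (0 : ℝ), u (t + T) = u t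

end LinearControlSystem

section Helpers

open LinearControlSystem

variable {X Y U : Type*}
    [NormedAddCommGroup X] [NormedSpace ℝ X]
    [NormedAddCommGroup Y] [NormedSpace ℝ Y]
    [NormedAddCommGroup U] [NormedSpace ℝ U]
    (sys : LinearControlSystem X Y U)

lemma le_runSup' {u : ℝ → U} (hu : u ∈ sys.inputs) {s t : ℝ} (hs : s ∈ Set.Icc 0 t) :
    ‖u s‖ ≤ runSup u t :=
  le_csSup (sys.loc_bdd u hu t) ⟨s, hs, rfl⟩

lemma runSup_nonneg' {u : ℝ → U} (hu : u ∈ sys.inputs) {t : ℝ} (ht : 0 ≤ t) :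
    0 ≤ runSup u t :=
  le_trans (norm_nonneg _) (le_runSup' sys hu ⟨le_rfl, ht⟩)

lemma runSup_mono' {u : ℝ → U} (hu : u ∈ sys.inputs) {t₁ t₂ : ℝ} (h1 : 0 ≤ t₁)
    (h12 : t₁ ≤ t₂) : runSup u t₁ ≤ runSup u t₂ :=
  csSup_le_csSup (sys.loc_bdd u hu t₂) ⟨‖u 0‖, ⟨0, ⟨le_rfl, h1⟩, rfl⟩⟩
    (Set.image_mono (Set.Icc_subset_Icc le_rfl h12))

lemma runSup_le' {u : ℝ → U} {t a : ℝ} (ht : 0 ≤ t)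
    (h : ∀ s ∈ Set.Icc (0:ℝ) t, ‖u s‖ ≤ a) : runSup u t ≤ a :=
  csSup_le ⟨‖u 0‖, ⟨0, ⟨le_rfl, ht⟩, rfl⟩⟩ (by rintro r ⟨s, hs, rfl⟩; exact h s hs)

lemma trans_zero_zero' {t : ℝ} (ht : 0 ≤ t) : sys.trans t 0 0 = 0 := by
  simpa using sys.linearity t ht 0 0 0 sys.zero_mem 0 sys.zero_mem 0 0

lemma trans_smul' {u : ℝ → U} (hu : u ∈ sys.inputs) {t : ℝ} (ht : 0 ≤ t) (k : ℝ) :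
    sys.trans t 0 (k • u) = k • sys.trans t 0 u := by
  simpa using sys.linearity t ht 0 0 u hu u hu k 0

lemma trans_split' {u : ℝ → U} (hu : u ∈ sys.inputs) {t : ℝ} (ht : 0 ≤ t) (x : X) :
    sys.trans t x u = sys.trans t x 0 + sys.trans t 0 u := by
  simpa using sys.linearity t ht x 0 0 sys.zero_mem u hu 1 1

/-- scaling of `sSup` of an image of norms -/
lemma sSup_image_mul {f : ℝ → ℝ} {S : Set ℝ} (hS : S.Nonempty)
    (hbdd : BddAbove (f '' S)) {k : ℝ} (hk : 0 ≤ k) :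
    sSup ((fun s => k * f s) '' S) = k * sSup (f '' S) := by
  have h1 : (fun s => k * f s) '' S = (fun r => k • r) '' (f '' S) := by
    rw [Set.image_image]; simp only [smul_eq_mul]
  rw [h1, Set.image_smul, Real.sSup_smul_of_nonneg hk, smul_eq_mul]

lemma runSup_smul' {u : ℝ → U} {t k : ℝ} (hk : 0 ≤ k) :
    runSup (k • u) t = k * runSup u t := by
  unfold runSup
  have h1 : (fun s => ‖(k • u) s‖) = fun s => k * ‖u s‖ := by
    funext s; simp [norm_smul, abs_of_nonneg hk]
  rw [h1, show ((fun s => k * ‖u s‖) '' Set.Icc 0 t) = (fun r => k • r) '' ((fun s => ‖u s‖) '' Set.Icc 0 t) by rw [Set.image_image]; simp only [smul_eq_mul],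
    Set.image_smul, Real.sSup_smul_of_nonneg hk, smul_eq_mul]

/-- The key estimate: `‖φ(t,0,u)‖ ≤ C · runSup u t` for an ES, robust system. -/
lemma gain_bound (hES : sys.ES) (hrob : sys.Robust) :
    ∃ C : ℝ, 0 ≤ C ∧ ∀ u ∈ sys.inputs, ∀ t : ℝ, 0 ≤ t →
      ‖sys.trans t 0 u‖ ≤ C * runSup u t := by
  obtain ⟨M, σ, hM, hσ, hESb⟩ := hES
  obtain ⟨b, hbmono, hbnn, hrobb⟩ := hrob
  set L : ℝ := max 1 (σ⁻¹ * Real.log (2 * M)) with hLdef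
  have hL0 : (0:ℝ) < L := lt_of_lt_of_le one_pos (le_max_left _ _)
  have hq : M * Real.exp (-σ * L) ≤ 1 / 2 := by
    have h1 : Real.log (2 * M) ≤ σ * L := by
      rcases le_or_gt (Real.log (2 * M)) 0 with h | h
      · exact h.trans (by positivity)
      · have h2 : σ⁻¹ * Real.log (2 * M) ≤ L := le_max_right _ _
        have h3 : σ * (σ⁻¹ * Real.log (2 * M)) ≤ σ * L :=
          mul_le_mul_of_nonneg_left h2 hσ.le
        calc Real.log (2 * M) = σ * (σ⁻¹ * Real.log (2 * M)) := by
              field_simp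
          _ ≤ σ * L := h3
    have h2 : Real.exp (-σ * L) ≤ (2 * M)⁻¹ := by
      rw [show -σ * L = -(σ * L) by ring, Real.exp_neg,
        ← Real.exp_log (show (0:ℝ) < 2 * M by positivity)]
      exact inv_anti₀ (Real.exp_pos _) (Real.exp_le_exp.mpr h1)
    calc M * Real.exp (-σ * L) ≤ M * (2 * M)⁻¹ :=
          mul_le_mul_of_nonneg_left h2 hM.le
      _ = 1 / 2 := by field_simp
  have hbL : 0 ≤ b L := hbnn L
  have key : ∀ n : ℕ, ∀ u ∈ sys.inputs, ∀ t : ℝ, 0 ≤ t → t ≤ (n + 1) * L →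
      ‖sys.trans t 0 u‖ ≤ 2 * b L * runSup u t := by
    intro n
    induction n with
    | zero =>
      intro u hu t ht htL
      have htL' : t ≤ L := by push_cast at htL; linarith
      have hbt : b t ≤ b L := hbmono ht hL0.le htL'
      have hrs := runSup_nonneg' sys hu ht
      calc ‖sys.trans t 0 u‖ ≤ b t * runSup u t := hrobb u hu t ht
        _ ≤ 2 * b L * runSup u t := by nlinarith [hbnn t]
    | succ n ih =>
      intro u hu t ht htL
      rcases le_or_gt t ((n + 1) * L) with h | h
      · exact ih u hu t ht h
      · set τ := t - L with hτdef
        have hn0 : (0:ℝ) ≤ (n:ℝ) * L := by positivity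
        have hτ0 : 0 < τ := by
          have : (n:ℝ) * L < t - L := by push_cast at h; nlinarith
          linarith
        have hτle : τ ≤ (n + 1) * L := by push_cast at htL ⊢; linarith
        have hτt : τ ≤ t := by linarith
        have hw : (fun s => u (s + τ)) ∈ sys.inputs := sys.shift_mem u hu τ hτ0
        have hsg := sys.semigroup 0 u hu τ t hτ0.le hτt
        have hTτ : t - τ = L := by rw [hτdef]; ring
        rw [hTτ] at hsg
        set x := sys.trans τ 0 u with hx
        set w : ℝ → U := fun s => u (s + τ) with hwdef
        have hsplit := trans_split' sys hw hL0.le x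
        have hES1 : ‖sys.trans L x 0‖ ≤ M * Real.exp (-σ * L) * ‖x‖ :=
          hESb x L hL0.le
        have hrob1 : ‖sys.trans L 0 w‖ ≤ b L * runSup w L := hrobb w hw L hL0.le
        have hxle : ‖x‖ ≤ 2 * b L * runSup u τ := ih u hu τ hτ0.le hτle
        have hwsup : runSup w L ≤ runSup u t := by
          apply runSup_le' hL0.le
          intro s hs
          exact le_runSup' sys hu ⟨by linarith [hs.1, hτ0.le], by
            have := hs.2; rw [hτdef]; linarith⟩
        have hmono : runSup u τ ≤ runSup u t := runSup_mono' sys hu hτ0.le hτt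
        have hnn : 0 ≤ runSup u t := runSup_nonneg' sys hu ht
        have hnnτ : 0 ≤ runSup u τ := runSup_nonneg' sys hu hτ0.le
        have hMe : 0 ≤ M * Real.exp (-σ * L) := by positivity
        calc ‖sys.trans t 0 u‖ = ‖sys.trans L x 0 + sys.trans L 0 w‖ := by
              rw [hsg, hsplit]
          _ ≤ ‖sys.trans L x 0‖ + ‖sys.trans L 0 w‖ := norm_add_le _ _
          _ ≤ M * Real.exp (-σ * L) * ‖x‖ + b L * runSup w L := by
              exact add_le_add hES1 hrob1
          _ ≤ (1/2) * (2 * b L * runSup u τ) + b L * runSup u t := by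
              have h1 : M * Real.exp (-σ * L) * ‖x‖ ≤ (1/2) * ‖x‖ :=
                mul_le_mul_of_nonneg_right hq (norm_nonneg x)
              have h2 : (1/2 : ℝ) * ‖x‖ ≤ (1/2) * (2 * b L * runSup u τ) := by
                nlinarith
              have h3 : b L * runSup w L ≤ b L * runSup u t :=
                mul_le_mul_of_nonneg_left hwsup hbL
              linarith
          _ ≤ 2 * b L * runSup u t := by nlinarith
  refine ⟨2 * b L, by positivity, fun u hu t ht => ?_⟩
  obtain ⟨n, hn⟩ := exists_nat_ge (t / L)
  have htn : t ≤ (n + 1) * L := by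
    have : t ≤ n * L := by
      rw [div_le_iff₀ hL0] at hn; linarith [hn]
    nlinarith [hL0.le]
  exact key n u hu t ht htn

/-- values of an admissible periodic input are bounded above on `[0, ∞)`. -/
lemma periodic_bdd {u : ℝ → U} (hu : u ∈ sys.inputs) {T : ℝ} (hT : 0 < T)
    (hper : ∀ t ≥ (0:ℝ), u (t + T) = u t) :
    ∀ s : ℝ, 0 ≤ s → ‖u s‖ ≤ runSup u T := by
  have key : ∀ n : ℕ, ∀ s : ℝ, 0 ≤ s → s ≤ (n + 1) * T → ‖u s‖ ≤ runSup u T := by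
    intro n
    induction n with
    | zero =>
      intro s hs hsT
      exact le_runSup' sys hu ⟨hs, by push_cast at hsT; linarith⟩
    | succ n ih =>
      intro s hs hsT
      rcases le_or_gt s ((n + 1) * T) with h | h
      · exact ih s hs h
      · have hsT' : T ≤ s := by
          have : (0:ℝ) ≤ (n:ℝ) * T := by positivity
          push_cast at h; nlinarith
        have h1 : u s = u (s - T) := by
          have := hper (s - T) (by linarith)
          rw [show s - T + T = s by ring] at this
          exact this
        rw [h1]
        exact ih (s - T) (by linarith) (by push_cast at hsT ⊢; linarith)
  intro s hs
  obtain ⟨n, hn⟩ := exists_nat_ge (s / T)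
  refine key n s hs ?_
  rw [div_le_iff₀ hT] at hn
  nlinarith [hT.le]

/-- construction of the periodic extension achieving the same output value -/
lemma periodic_construction {u : ℝ → U} (hu : u ∈ sys.inputs)
    (hsc : sys.StrictlyCausal) {t : ℝ} (ht : 0 < t)
    (h1 : sSup ((fun s => ‖u s‖) '' Set.Ico 0 t) = 1) :
    ∃ v ∈ sys.inputs, Periodic v ∧ supNorm v = 1 ∧
      sys.trans t 0 v = sys.trans t 0 u := by
  set T : ℝ := t + 1 with hTdef
  have hT0 : (0:ℝ) < T := by linarith
  set u₀ : ℝ → U := fun s => if s < t then u s else 0 with hu₀def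
  have hu₀mem : u₀ ∈ sys.inputs := by
    have := sys.concat_lt_mem u hu 0 sys.zero_mem t ht
    simpa [hu₀def] using this
  set v : ℝ → U := fun s => u₀ (s - T * ⌊s / T⌋) with hvdef
  have hvmem : v ∈ sys.inputs := sys.periodic_ext_mem u₀ hu₀mem T hT0
  have hfr : ∀ s : ℝ, s - T * ⌊s / T⌋ ∈ Set.Ico 0 T := by
    intro s
    constructor
    · have := Int.sub_floor_div_mul_nonneg s hT0
      linarith [this, mul_comm T ((⌊s / T⌋ : ℝ))]
    · have := Int.sub_floor_div_mul_lt s hT0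
      linarith [this, mul_comm T ((⌊s / T⌋ : ℝ))]
  have hfloor0 : ∀ s ∈ Set.Ico (0:ℝ) T, ⌊s / T⌋ = 0 := by
    intro s hs
    rw [Int.floor_eq_zero_iff]
    constructor
    · exact div_nonneg hs.1 hT0.le
    · rw [div_lt_one hT0]; exact hs.2
  have hvIco : ∀ s ∈ Set.Ico (0:ℝ) T, v s = u₀ s := by
    intro s hs
    rw [hvdef]
    simp only [hfloor0 s hs]
    norm_num
  have hper : Periodic v := by
    refine ⟨T, hT0, fun s _ => ?_⟩
    rw [hvdef]
    simp only
    have h2 : (s + T) / T = s / T + 1 := by field_simp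
    rw [h2, Int.floor_add_one]
    congr 1
    push_cast; ring
  have hsc1 : sys.trans t 0 v = sys.trans t 0 u := by
    apply hsc t ht v hvmem u hu
    intro s hs hst
    rw [hvIco s ⟨hs, by linarith⟩, hu₀def]
    simp [hst]
  have hbddIco : BddAbove ((fun s => ‖u s‖) '' Set.Ico 0 t) :=
    BddAbove.mono (Set.image_mono Set.Ico_subset_Icc_self) (sys.loc_bdd u hu t)
  have hub : ∀ s : ℝ, ‖v s‖ ≤ 1 := by
    intro s
    rw [hvdef]
    simp only
    set r := s - T * ⌊s / T⌋ with hr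
    have hrIco := hfr s
    rw [hu₀def]
    by_cases hrt : r < t
    · simp only [if_pos hrt]
      rw [← h1]
      exact le_csSup hbddIco ⟨r, ⟨hrIco.1, hrt⟩, rfl⟩
    · simp [if_neg hrt]
  have hsn : supNorm v = 1 := by
    apply le_antisymm
    · exact csSup_le ⟨‖v 0‖, ⟨0, Set.self_mem_Ici, rfl⟩⟩ (by rintro x ⟨s, _, rfl⟩; exact hub s)
    · rw [← h1]
      refine csSup_le ⟨‖u 0‖, ⟨0, ⟨le_rfl, ht⟩, rfl⟩⟩ ?_
      rintro x ⟨s, hs, rfl⟩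
      show ‖u s‖ ≤ supNorm v
      have hvs : v s = u s := by
        rw [hvIco s ⟨hs.1, by linarith [hs.2]⟩, hu₀def]
        simp [hs.2]
      rw [← hvs]
      exact le_csSup ⟨1, by rintro x ⟨s', _, rfl⟩; exact hub s'⟩ ⟨s, hs.1, rfl⟩
  exact ⟨v, hvmem, hper, hsn, hsc1⟩

end Helpers

open LinearControlSystem in
/-- Theorem 4.3, equation (4.7): for an ES, robust, strictly causal linear control system,
the minimum IOS-gain can be computed using only periodic inputs. -/
theorem statement_7 {X Y U : Type*}
    [NormedAddCommGroup X] [NormedSpace ℝ X]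
    [NormedAddCommGroup Y] [NormedSpace ℝ Y]
    [NormedAddCommGroup U] [NormedSpace ℝ U]
    (sys : LinearControlSystem X Y U)
    (hES : sys.ES) (hrob : sys.Robust) (hsc : sys.StrictlyCausal) :
    sys.gain = sSup {r | ∃ u ∈ sys.inputs, Periodic u ∧ supNorm u = 1 ∧
      r = sSup ((fun t => ‖sys.out (sys.trans t 0 u)‖) '' Set.Ici 0)} := by
    classical
  unfold LinearControlSystem.gain
  obtain ⟨C, hC0, hC⟩ := gain_bound sys hES hrob
  set K := ‖sys.out‖ * C with hKdef
  have hK0 : 0 ≤ K := by positivity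
  have hout : ∀ u ∈ sys.inputs, ∀ t : ℝ, 0 ≤ t →
      ‖sys.out (sys.trans t 0 u)‖ ≤ K * runSup u t := by
    intro u hu t ht
    calc ‖sys.out (sys.trans t 0 u)‖ ≤ ‖sys.out‖ * ‖sys.trans t 0 u‖ :=
          sys.out.le_opNorm _
      _ ≤ ‖sys.out‖ * (C * runSup u t) :=
          mul_le_mul_of_nonneg_left (hC u hu t ht) (norm_nonneg _)
      _ = K * runSup u t := by rw [hKdef]; ring
  set A := {r | ∃ t ≥ (0 : ℝ), ∃ u ∈ sys.inputs, runSup u t = 1 ∧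
    r = ‖sys.out (sys.trans t 0 u)‖} with hAdef
  set B := {r | ∃ u ∈ sys.inputs, Periodic u ∧ supNorm u = 1 ∧
    r = sSup ((fun t => ‖sys.out (sys.trans t 0 u)‖) '' Set.Ici 0)} with hBdef
  have hperfacts : ∀ u ∈ sys.inputs, Periodic u → supNorm u = 1 →
      (∀ t : ℝ, 0 ≤ t → runSup u t ≤ 1) := by
    rintro u hu ⟨T, hT, hper⟩ hsn t ht
    have hbdd : ∀ s : ℝ, 0 ≤ s → ‖u s‖ ≤ runSup u T := periodic_bdd sys hu hT hper
    have hbddAbove : BddAbove ((fun s => ‖u s‖) '' Set.Ici 0) :=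
      ⟨runSup u T, by rintro x ⟨s, hs, rfl⟩; exact hbdd s hs⟩
    apply runSup_le' ht
    intro s hs
    calc ‖u s‖ ≤ supNorm u := le_csSup hbddAbove ⟨s, hs.1, rfl⟩
      _ = 1 := hsn
  have hAbdd : BddAbove A := by
    refine ⟨K, ?_⟩
    rintro r ⟨t, ht, u, hu, hrs, rfl⟩
    calc ‖sys.out (sys.trans t 0 u)‖ ≤ K * runSup u t := hout u hu t ht
      _ = K := by rw [hrs, mul_one]
  have hBval : ∀ u ∈ sys.inputs, Periodic u → supNorm u = 1 → ∀ t : ℝ, 0 ≤ t →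
      ‖sys.out (sys.trans t 0 u)‖ ≤ K := by
    intro u hu hp hsn t ht
    calc ‖sys.out (sys.trans t 0 u)‖ ≤ K * runSup u t := hout u hu t ht
      _ ≤ K * 1 := mul_le_mul_of_nonneg_left (hperfacts u hu hp hsn t ht) hK0
      _ = K := mul_one K
  have hBbdd : BddAbove B := by
    refine ⟨K, ?_⟩
    rintro r ⟨u, hu, hp, hsn, rfl⟩
    refine csSup_le ⟨‖sys.out (sys.trans 0 0 u)‖, ⟨0, Set.self_mem_Ici, rfl⟩⟩ ?_
    rintro x ⟨s, hs, rfl⟩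
    exact hBval u hu hp hsn s hs
  obtain ⟨e, he⟩ := sys.U_nontrivial
  obtain ⟨u₀, hu₀, hu₀0⟩ := sys.exists_input_val (‖e‖⁻¹ • e)
  have hu₀norm : ‖u₀ 0‖ = 1 := by
    rw [hu₀0, norm_smul, norm_inv, norm_norm, inv_mul_cancel₀ (norm_ne_zero_iff.mpr he)]
  have h0A : (0:ℝ) ∈ A := by
    refine ⟨0, le_rfl, u₀, hu₀, ?_, ?_⟩
    · unfold LinearControlSystem.runSup
      rw [Set.Icc_self, Set.image_singleton, csSup_singleton, hu₀norm]
    · rw [sys.identity 0 u₀ hu₀, map_zero, norm_zero]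
  have hA0 : 0 ≤ sSup A := le_csSup hAbdd h0A
  have hB0 : 0 ≤ sSup B := by
    set c := sSup ((fun s => ‖u₀ s‖) '' Set.Ico 0 1) with hcdef
    have hbddIco : BddAbove ((fun s => ‖u₀ s‖) '' Set.Ico 0 1) :=
      BddAbove.mono (Set.image_mono Set.Ico_subset_Icc_self) (sys.loc_bdd u₀ hu₀ 1)
    have hc1 : (1:ℝ) ≤ c := by
      rw [← hu₀norm]
      exact le_csSup hbddIco ⟨0, ⟨le_rfl, one_pos⟩, rfl⟩
    have hcpos : 0 < c := lt_of_lt_of_le one_pos hc1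
    set u₁ : ℝ → U := c⁻¹ • u₀ with hu₁def
    have hu₁ : u₁ ∈ sys.inputs := sys.smul_mem u₀ hu₀ c⁻¹
    have hu₁sup : sSup ((fun s => ‖u₁ s‖) '' Set.Ico 0 1) = 1 := by
      have h1 : (fun s => ‖u₁ s‖) = fun s => c⁻¹ * ‖u₀ s‖ := by
        funext s
        rw [hu₁def, Pi.smul_apply, norm_smul, Real.norm_eq_abs,
          abs_of_nonneg (inv_nonneg.mpr hcpos.le)]
      rw [h1, sSup_image_mul (Set.nonempty_Ico.mpr one_pos) hbddIco (inv_nonneg.mpr hcpos.le),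
        ← hcdef, inv_mul_cancel₀ hcpos.ne']
    obtain ⟨v, hv, hvp, hvsn, _⟩ :=
      periodic_construction sys hu₁ hsc one_pos hu₁sup
    have hvB : sSup ((fun t => ‖sys.out (sys.trans t 0 v)‖) '' Set.Ici 0) ∈ B :=
      ⟨v, hv, hvp, hvsn, rfl⟩
    have hvnn : 0 ≤ sSup ((fun t => ‖sys.out (sys.trans t 0 v)‖) '' Set.Ici 0) :=
      le_trans (norm_nonneg _)
        (le_csSup ⟨K, by rintro x ⟨s, hs, rfl⟩; exact hBval v hv hvp hvsn s hs⟩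
          ⟨0, Set.self_mem_Ici, rfl⟩)
    exact le_trans hvnn (le_csSup hBbdd hvB)
  apply le_antisymm
  · -- sSup A ≤ sSup B
    apply Real.sSup_le _ hB0
    rintro a ⟨t, ht, u, hu, hrs, rfl⟩
    rcases eq_or_lt_of_le ht with ht0 | ht0
    · rw [← ht0, sys.identity 0 u hu, map_zero, norm_zero]
      exact hB0
    · set c := sSup ((fun s => ‖u s‖) '' Set.Ico 0 t) with hcdef
      have hbddIco : BddAbove ((fun s => ‖u s‖) '' Set.Ico 0 t) :=
        BddAbove.mono (Set.image_mono Set.Ico_subset_Icc_self) (sys.loc_bdd u hu t)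
      have hc0 : 0 ≤ c := le_trans (norm_nonneg (u 0))
        (le_csSup hbddIco ⟨0, ⟨le_rfl, ht0⟩, rfl⟩)
      have hc1 : c ≤ 1 := by
        rw [← hrs]
        refine csSup_le ⟨‖u 0‖, ⟨0, ⟨le_rfl, ht0⟩, rfl⟩⟩ ?_
        rintro x ⟨s, hs, rfl⟩
        exact le_runSup' sys hu ⟨hs.1, hs.2.le⟩
      rcases eq_or_lt_of_le hc0 with hc | hc
      · have hagree : ∀ s, 0 ≤ s → s < t → u s = (0 : ℝ → U) s := by
          intro s hs hst
          have h3 : ‖u s‖ ≤ c := le_csSup hbddIco ⟨s, ⟨hs, hst⟩, rfl⟩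
          rw [← hc] at h3
          simpa using norm_le_zero_iff.mp h3
        have hzero : sys.trans t 0 u = 0 := by
          rw [hsc t ht0 u hu 0 sys.zero_mem hagree, trans_zero_zero' sys ht]
        rw [hzero, map_zero, norm_zero]
        exact hB0
      · set u' : ℝ → U := c⁻¹ • u with hu'def
        have hu' : u' ∈ sys.inputs := sys.smul_mem u hu c⁻¹
        have hu'sup : sSup ((fun s => ‖u' s‖) '' Set.Ico 0 t) = 1 := by
          have h1 : (fun s => ‖u' s‖) = fun s => c⁻¹ * ‖u s‖ := by
            funext s
            rw [hu'def, Pi.smul_apply, norm_smul, Real.norm_eq_abs,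
              abs_of_nonneg (inv_nonneg.mpr hc.le)]
          rw [h1, sSup_image_mul (Set.nonempty_Ico.mpr ht0) hbddIco (inv_nonneg.mpr hc.le),
            ← hcdef, inv_mul_cancel₀ hc.ne']
        obtain ⟨v, hv, hvp, hvsn, hveq⟩ :=
          periodic_construction sys hu' hsc ht0 hu'sup
        set rv := sSup ((fun τ => ‖sys.out (sys.trans τ 0 v)‖) '' Set.Ici 0) with hrvdef
        have hrv_mem : rv ∈ B := ⟨v, hv, hvp, hvsn, rfl⟩
        have hbddv : BddAbove ((fun τ => ‖sys.out (sys.trans τ 0 v)‖) '' Set.Ici 0) :=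
          ⟨K, by rintro x ⟨s, hs, rfl⟩; exact hBval v hv hvp hvsn s hs⟩
        have h2 : ‖sys.out (sys.trans t 0 v)‖ ≤ rv := le_csSup hbddv ⟨t, ht, rfl⟩
        have hrv0 : 0 ≤ rv :=
          le_trans (norm_nonneg _) (le_csSup hbddv ⟨0, Set.self_mem_Ici, rfl⟩)
        have heq : ‖sys.out (sys.trans t 0 v)‖ = c⁻¹ * ‖sys.out (sys.trans t 0 u)‖ := by
          rw [hveq, hu'def, trans_smul' sys hu ht, map_smul, norm_smul,
            Real.norm_eq_abs, abs_of_nonneg (inv_nonneg.mpr hc.le)]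
        calc ‖sys.out (sys.trans t 0 u)‖ = c * ‖sys.out (sys.trans t 0 v)‖ := by
              rw [heq]; field_simp
          _ ≤ c * rv := mul_le_mul_of_nonneg_left h2 hc0
          _ ≤ 1 * rv := mul_le_mul_of_nonneg_right hc1 hrv0
          _ = rv := one_mul _
          _ ≤ sSup B := le_csSup hBbdd hrv_mem
  · -- sSup B ≤ sSup A
    apply Real.sSup_le _ hA0
    rintro r ⟨u, hu, hp, hsn, rfl⟩
    apply Real.sSup_le _ hA0
    rintro x ⟨τ, hτ, rfl⟩
    show ‖sys.out (sys.trans τ 0 u)‖ ≤ sSup A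
    set c := runSup u τ with hcdef
    have hc0 : 0 ≤ c := runSup_nonneg' sys hu hτ
    have hc1 : c ≤ 1 := hperfacts u hu hp hsn τ hτ
    rcases eq_or_lt_of_le hc0 with hc | hc
    · have hagree : ∀ s, 0 ≤ s → s ≤ τ → u s = (0 : ℝ → U) s := by
        intro s hs hst
        have h3 : ‖u s‖ ≤ c := le_runSup' sys hu ⟨hs, hst⟩
        rw [← hc] at h3
        simpa using norm_le_zero_iff.mp h3
      have hzero : sys.trans τ 0 u = 0 := by
        rw [sys.causality τ hτ 0 u hu 0 sys.zero_mem hagree, trans_zero_zero' sys hτ]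
      rw [hzero, map_zero, norm_zero]
      exact hA0
    · set u' : ℝ → U := c⁻¹ • u with hu'def
      have hu' : u' ∈ sys.inputs := sys.smul_mem u hu c⁻¹
      have hrs' : runSup u' τ = 1 := by
        rw [hu'def, runSup_smul' (inv_nonneg.mpr hc.le), ← hcdef,
          inv_mul_cancel₀ hc.ne']
      have hmemA : ‖sys.out (sys.trans τ 0 u')‖ ∈ A := ⟨τ, hτ, u', hu', hrs', rfl⟩
      have heq : ‖sys.out (sys.trans τ 0 u')‖ = c⁻¹ * ‖sys.out (sys.trans τ 0 u)‖ := by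
        rw [hu'def, trans_smul' sys hu hτ, map_smul, norm_smul, Real.norm_eq_abs,
          abs_of_nonneg (inv_nonneg.mpr hc.le)]
      calc ‖sys.out (sys.trans τ 0 u)‖ = c * ‖sys.out (sys.trans τ 0 u')‖ := by
            rw [heq]; field_simp
        _ ≤ c * sSup A := mul_le_mul_of_nonneg_left (le_csSup hAbdd hmemA) hc0
        _ ≤ 1 * sSup A := mul_le_mul_of_nonneg_right hc1 hA0
        _ = sSup A := one_mul _
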